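/- Let S ⊆ ℂ have Hausdorff dimension strictly greater than 1 and let N be a positive integer. Then there exists a point p ∈ S at which S has more than N distinct limit directions. -/

import Mathlib

open Complex Filter MeasureTheory

/-- `t` is a limit direction of `S` at `p`. -/
def IsLimitDirection (S : Set ℂ) (p t : ℂ) : Prop :=
  ‖t‖ = 1 ∧ ∃ q : ℕ → ℂ, (∀ j, q j ∈ S \ {p}) ∧
    Tendsto q atTop (nhds p) ∧
    Tendsto (fun j => (q j - p) / (‖q j - p‖ : ℂ)) atTop (nhds t)


noncomputable section
namespace Stmt4Aux

def ip (x y : ℂ) : ℝ := x.re * y.re + x.im * y.im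

lemma ip_comm (x y : ℂ) : ip x y = ip y x := by simp [ip]; ring

lemma ip_sub (x y e : ℂ) : ip (x - y) e = ip x e - ip y e := by
  simp [ip, Complex.sub_re, Complex.sub_im]; ring

lemma ip_real_mul (r : ℝ) (x y : ℂ) : ip ((r : ℂ) * x) y = r * ip x y := by
  simp [ip, Complex.mul_re, Complex.mul_im]; ring

lemma norm_sq_eq (x : ℂ) : ‖x‖ ^ 2 = x.re ^ 2 + x.im ^ 2 := by
  rw [Complex.sq_norm, Complex.normSq_apply]; ring

lemma pyth (e x : ℂ) (he : ‖e‖ = 1) :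
    ‖x‖ ^ 2 = ip x e ^ 2 + ip x (I * e) ^ 2 := by
  have h1 : e.re ^ 2 + e.im ^ 2 = 1 := by rw [← norm_sq_eq, he]; norm_num
  simp only [ip, Complex.mul_re, Complex.mul_im, Complex.I_re, Complex.I_im, norm_sq_eq]
  nlinarith [h1]

lemma norm_sub_sq' (x y : ℂ) : ‖x - y‖ ^ 2 = ‖x‖ ^ 2 + ‖y‖ ^ 2 - 2 * ip x y := by
  simp only [norm_sq_eq, Complex.sub_re, Complex.sub_im]; simp [ip]; ring

lemma norm_add_sq' (x y : ℂ) : ‖x + y‖ ^ 2 = ‖x‖ ^ 2 + ‖y‖ ^ 2 + 2 * ip x y := by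
  simp only [norm_sq_eq, Complex.add_re, Complex.add_im]; simp [ip]; ring

lemma continuous_ip (y : ℂ) : Continuous fun x => ip x y := by
  exact (Complex.continuous_re.mul continuous_const).add
    (Complex.continuous_im.mul continuous_const)

/-- The pairwise Lipschitz estimate from the cone condition. -/
lemma pair_est (e x : ℂ) (he : ‖e‖ = 1) {c : ℝ} (hc0 : 0 ≤ c) (hc1 : c < 1)
    (hx : |ip x e| ≤ c * ‖x‖) :
    ‖x‖ ≤ (Real.sqrt (1 - c ^ 2))⁻¹ * |ip x (I * e)| := by
  have h1 : 0 < 1 - c ^ 2 := by nlinarith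
  set K := (Real.sqrt (1 - c ^ 2))⁻¹ with hK
  have hKpos : 0 < K := by positivity
  have hK2 : K ^ 2 * (1 - c ^ 2) = 1 := by
    rw [hK, inv_pow, Real.sq_sqrt h1.le]
    field_simp
  have hp := pyth e x he
  have h2 : (1 - c ^ 2) * ‖x‖ ^ 2 ≤ ip x (I * e) ^ 2 := by
    have : ip x e ^ 2 ≤ (c * ‖x‖) ^ 2 := by
      have := abs_nonneg (ip x e)
      nlinarith [_root_.sq_abs (ip x e)]
    nlinarith
  have h3 : ‖x‖ ^ 2 ≤ (K * |ip x (I * e)|) ^ 2 := by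
    have : K ^ 2 * ((1 - c ^ 2) * ‖x‖ ^ 2) ≤ K ^ 2 * ip x (I * e) ^ 2 := by
      nlinarith [sq_nonneg K]
    calc ‖x‖ ^ 2 = K ^ 2 * (1 - c ^ 2) * ‖x‖ ^ 2 := by rw [hK2]; ring
    _ ≤ K ^ 2 * ip x (I * e) ^ 2 := by nlinarith
    _ = (K * |ip x (I * e)|) ^ 2 := by rw [mul_pow, _root_.sq_abs]
  have hn : 0 ≤ ‖x‖ := norm_nonneg x
  have hm : 0 ≤ K * |ip x (I * e)| := by positivity
  nlinarith

/-- Sets on which a coordinate projection is bi-Lipschitz have dimension at most 1. -/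
lemma dimH_le_one (e : ℂ) (K : NNReal) (A : Set ℂ)
    (hA : ∀ p ∈ A, ∀ q ∈ A, ‖q - p‖ ≤ (K : ℝ) * |ip (q - p) e|) : dimH A ≤ 1 := by
  classical
  set f : ℂ → ℝ := fun x => ip x e with hf
  have hdist : ∀ p ∈ A, ∀ q ∈ A, dist q p ≤ (K : ℝ) * dist (f q) (f p) := by
    intro p hp q hq
    have h := hA p hp q hq
    rwa [Complex.dist_eq, Real.dist_eq, hf, ← ip_sub]
  set g : ℝ → ℂ := fun y => if h : ∃ x ∈ A, f x = y then h.choose else 0 with hg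
  have hgmem : ∀ y ∈ f '' A, g y ∈ A ∧ f (g y) = y := by
    rintro y ⟨x, hx, rfl⟩
    have hex : ∃ x' ∈ A, f x' = f x := ⟨x, hx, rfl⟩
    simp only [hg, dif_pos hex]
    exact ⟨hex.choose_spec.1, hex.choose_spec.2⟩
  have hlip : LipschitzOnWith K g (f '' A) := by
    rw [lipschitzOnWith_iff_dist_le_mul]
    intro y hy y' hy'
    obtain ⟨hy1, hy2⟩ := hgmem y hy
    obtain ⟨hy1', hy2'⟩ := hgmem y' hy'
    calc dist (g y) (g y') ≤ (K : ℝ) * dist (f (g y)) (f (g y')) := hdist _ hy1' _ hy1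
    _ = (K : ℝ) * dist y y' := by rw [hy2, hy2']
  have hsub : A ⊆ g '' (f '' A) := by
    intro x hx
    have hfx : f x ∈ f '' A := ⟨x, hx, rfl⟩
    obtain ⟨h1, h2⟩ := hgmem _ hfx
    have : dist x (g (f x)) ≤ (K : ℝ) * dist (f x) (f (g (f x))) := hdist _ h1 _ hx
    rw [h2, dist_self, mul_zero] at this
    have hxg : x = g (f x) := by
      have := dist_le_zero.mp this
      exact this
    exact ⟨f x, hfx, hxg.symm⟩
  calc dimH A ≤ dimH (g '' (f '' A)) := dimH_mono hsub
  _ ≤ dimH (f '' A) := hlip.dimH_image_le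
  _ ≤ dimH (Set.univ : Set ℝ) := dimH_mono (Set.subset_univ _)
  _ = 1 := by
    rw [Real.dimH_univ_eq_finrank ℝ]
    simp

end Stmt4Aux

set_option maxHeartbeats 2000000 in
open Stmt4Aux in
theorem stmt4 (S : Set ℂ) (hS : 1 < dimH S) (N : ℕ) (hN : 0 < N) :
    ∃ p ∈ S, ∃ T : Finset ℂ, N < T.card ∧ ∀ t ∈ T, IsLimitDirection S p t := by
  classical
  by_contra hcon
  push_neg at hcon
  -- Step 0: each direction set is contained in a finset of cardinality ≤ N
  have hD : ∀ p ∈ S, ∃ T : Finset ℂ, T.card ≤ N ∧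
      ∀ t, IsLimitDirection S p t → t ∈ T := by
    intro p hp
    have hfin : {t | IsLimitDirection S p t}.Finite := by
      rcases Set.finite_or_infinite {t | IsLimitDirection S p t} with h | h
      · exact h
      · obtain ⟨T, hTsub, hTcard⟩ := h.exists_subset_card_eq (N + 1)
        obtain ⟨t, htT, htn⟩ := hcon p hp T (by omega)
        exact absurd (hTsub htT) htn
    refine ⟨hfin.toFinset, ?_, fun t ht => hfin.mem_toFinset.mpr ht⟩
    by_contra hgt
    obtain ⟨t, htT, htn⟩ := hcon p hp hfin.toFinset (by omega)
    exact htn (hfin.mem_toFinset.mp htT)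
  -- Step 1: the family of directions
  set M : ℕ := 2 * N + 1 with hM
  set eV : ℕ → ℂ := fun k => Complex.exp (k * I) with heVdef
  have heV1 : ∀ k, ‖eV k‖ = 1 := by
    intro k
    simp [heVdef, Complex.norm_exp, Complex.mul_re]
  have heVinj : ∀ k k' : ℕ, eV k = eV k' → k = k' := by
    intro k k' h
    rw [heVdef] at h
    simp only at h
    rw [Complex.exp_eq_exp_iff_exists_int] at h
    obtain ⟨n, hn⟩ := h
    have him : (k : ℝ) = (k' : ℝ) + (n : ℝ) * (2 * Real.pi) := by
      have := congrArg Complex.im hn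
      simpa [Complex.mul_im, Complex.add_im] using this
    rcases eq_or_ne n 0 with h0 | h0
    · subst h0; simp at him; exact_mod_cast him
    · exfalso
      have hπ : Real.pi = ((k : ℝ) - (k' : ℝ)) / (2 * (n : ℝ)) := by
        have hn0 : (n : ℝ) ≠ 0 := Int.cast_ne_zero.mpr h0
        field_simp
        linarith [him]
      have : Irrational Real.pi := irrational_pi
      apply this
      refine ⟨((k : ℚ) - (k' : ℚ)) / (2 * (n : ℚ)), ?_⟩
      rw [hπ]; push_cast; ring
  -- Step 2: the separation constant δ
  obtain ⟨δ, hδ0, hδ1, hδsep⟩ : ∃ δ : ℝ, 0 < δ ∧ δ ≤ 1/3 ∧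
      ∀ k < M, ∀ k' < M, k ≠ k' → 2 * δ < ‖eV k - eV k'‖ := by
    set P := (Finset.range M).offDiag with hP
    have hPne : P.Nonempty := by
      refine ⟨(0, 1), Finset.mem_offDiag.mpr ⟨?_, ?_, ?_⟩⟩ <;>
        simp [Finset.mem_range] <;> omega
    set m := P.inf' hPne (fun w => ‖eV w.1 - eV w.2‖) with hm
    have hm0 : 0 < m := by
      rw [hm, Finset.lt_inf'_iff]
      rintro ⟨a, b⟩ hab
      obtain ⟨-, -, hne⟩ := Finset.mem_offDiag.mp hab
      have : eV a ≠ eV b := fun h => hne (heVinj a b h)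
      rw [norm_pos_iff]; exact sub_ne_zero.mpr this
    refine ⟨min (m/3) (1/3), lt_min (by linarith) (by norm_num), min_le_right _ _, ?_⟩
    intro k hk k' hk' hne
    have hmem : (k, k') ∈ P := Finset.mem_offDiag.mpr
      ⟨Finset.mem_range.mpr hk, Finset.mem_range.mpr hk', hne⟩
    have hle : m ≤ ‖eV k - eV k'‖ := by
      rw [hm]
      exact (Finset.inf'_le_iff hPne).mpr ⟨(k,k'), hmem, le_refl _⟩
    have : 2 * min (m/3) (1/3) ≤ 2 * (m/3) := by
      have := min_le_left (m/3) (1/3); linarith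
    linarith
  set c : ℝ := 1 - δ ^ 2 / 8 with hc
  have hc0 : 0 ≤ c := by rw [hc]; nlinarith
  have hc1 : c < 1 := by rw [hc]; nlinarith
  -- Step 3: choose for each p a direction avoiding all limit directions
  have hdirsel : ∀ p ∈ S, ∃ k < M, ∀ t, IsLimitDirection S p t →
      δ ≤ ‖eV k - t‖ ∧ δ ≤ ‖eV k + t‖ := by
    intro p hp
    obtain ⟨T, hTcard, hTmem⟩ := hD p hp
    by_contra hno
    push_neg at hno
    have hsel : ∀ k < M, ∃ w : ℂ, w ∈ T ∪ T.image (fun t => -t) ∧ ‖eV k - w‖ < δ := by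
      intro k hk
      obtain ⟨t, ht, hor⟩ := hno k hk
      by_cases h1 : ‖eV k - t‖ < δ
      · exact ⟨t, Finset.mem_union_left _ (hTmem t ht), h1⟩
      · refine ⟨-t, Finset.mem_union_right _ (Finset.mem_image.mpr ⟨t, hTmem t ht, rfl⟩), ?_⟩
        have h2 : ‖eV k + t‖ < δ := hor (le_of_not_gt h1)
        simpa [sub_neg_eq_add] using h2
    choose w hw hwlt using hsel
    set w' : ℕ → ℂ := fun k => if hk : k < M then w k hk else 0 with hw'
    have hcard : (Finset.range M).card ≤ (T ∪ T.image (fun t => -t)).card := by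
      apply Finset.card_le_card_of_injOn w'
      · intro a ha
        simp only [Finset.coe_range, Set.mem_Iio] at ha
        simp only [hw', dif_pos ha]
        exact hw a ha
      · intro a ha b hb hab
        simp only [Finset.coe_range, Set.mem_Iio] at ha hb
        by_contra hne
        have h2δ := hδsep a ha b hb hne
        simp only [hw', dif_pos ha, dif_pos hb] at hab
        have : ‖eV a - eV b‖ < 2 * δ := by
          calc ‖eV a - eV b‖ = ‖(eV a - w a ha) - (eV b - w b hb)‖ := by rw [hab]; ring_nf
          _ ≤ ‖eV a - w a ha‖ + ‖eV b - w b hb‖ := norm_sub_le _ _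
          _ < δ + δ := add_lt_add (hwlt a ha) (hwlt b hb)
          _ = 2 * δ := by ring
        linarith
    have : M ≤ 2 * N := by
      calc M = (Finset.range M).card := (Finset.card_range M).symm
      _ ≤ (T ∪ T.image (fun t => -t)).card := hcard
      _ ≤ T.card + (T.image (fun t => -t)).card := Finset.card_union_le _ _
      _ ≤ T.card + T.card := by
            have := Finset.card_image_le (s := T) (f := fun t => -t); omega
      _ ≤ 2 * N := by omega
    omega
  -- Step 4: cone condition at small scale
  have hcone : ∀ p ∈ S, ∃ k j : ℕ, ∀ q ∈ S, q ≠ p → ‖q - p‖ < 1/((j:ℝ)+1) →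
      |ip (q - p) (eV k)| ≤ c * ‖q - p‖ := by
    intro p hp
    obtain ⟨k, hkM, hk⟩ := hdirsel p hp
    refine ⟨k, ?_⟩
    by_contra hno
    push_neg at hno
    choose q hqS hqne hqlt hqip using hno
    have hqpos : ∀ j, 0 < ‖q j - p‖ := fun j => norm_pos_iff.mpr (sub_ne_zero.mpr (hqne j))
    set u : ℕ → ℂ := fun j => (q j - p) / (‖q j - p‖ : ℂ) with hu
    have hu1 : ∀ j, ‖u j‖ = 1 := by
      intro j
      rw [hu]
      simp only [norm_div, Complex.norm_real, Real.norm_eq_abs,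
        abs_of_pos (hqpos j)]
      exact div_self (hqpos j).ne'
    have huip : ∀ j, c < |ip (u j) (eV k)| := by
      intro j
      have hqu : q j - p = ((‖q j - p‖ : ℝ) : ℂ) * u j := by
        have hr : ((‖q j - p‖ : ℝ) : ℂ) ≠ 0 := Complex.ofReal_ne_zero.mpr (hqpos j).ne'
        rw [hu]
        rw [mul_div_assoc', mul_comm, mul_div_assoc, div_self hr, mul_one]
      have h1 : |ip (q j - p) (eV k)| = ‖q j - p‖ * |ip (u j) (eV k)| := by
        rw [hqu, ip_real_mul, abs_mul, abs_of_pos (hqpos j)]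
        congr 1
        rw [← hqu]
      have := hqip j
      rw [h1] at this
      exact lt_of_mul_lt_mul_left (by rwa [mul_comm c _] at this) (hqpos j).le
    obtain ⟨d, hdmem, φ, hφ, hconv⟩ :=
      tendsto_subseq_of_bounded (Metric.isBounded_closedBall (x := (0:ℂ)) (r := 1))
        (x := u) (fun n => by
          simp [Metric.mem_closedBall, Complex.dist_eq, hu1 n] )
    have hd1 : ‖d‖ = 1 := by
      have h1 : Tendsto (fun n => ‖(u ∘ φ) n‖) atTop (nhds ‖d‖) := hconv.norm
      have h2 : (fun n => ‖(u ∘ φ) n‖) = fun _ => (1:ℝ) := funext fun n => hu1 (φ n)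
      rw [h2] at h1
      exact tendsto_nhds_unique h1 tendsto_const_nhds
    have hqtend : Tendsto (q ∘ φ) atTop (nhds p) := by
      rw [tendsto_iff_dist_tendsto_zero]
      apply squeeze_zero (fun n => dist_nonneg)
        (g := fun n : ℕ => 1/((n:ℝ)+1))
      · intro n
        have h1 : dist ((q ∘ φ) n) p < 1/((φ n : ℝ)+1) := by
          rw [Function.comp_apply, Complex.dist_eq]; exact hqlt (φ n)
        have h2 : 1/((φ n : ℝ)+1) ≤ 1/((n:ℝ)+1) := by
          apply one_div_le_one_div_of_le (by positivity)
          have h3 : n ≤ φ n := hφ.le_apply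
          have h4 : ((n:ℝ)) ≤ ((φ n : ℕ) : ℝ) := Nat.cast_le.mpr h3
          linarith
        linarith
      · exact tendsto_one_div_add_atTop_nhds_zero_nat
    have hILD : IsLimitDirection S p d := by
      refine ⟨hd1, q ∘ φ, fun j => ?_, hqtend, hconv⟩
      exact ⟨hqS (φ j), hqne (φ j)⟩
    have hlimip : c ≤ |ip d (eV k)| := by
      have hcont : Tendsto (fun n => |ip ((u ∘ φ) n) (eV k)|) atTop (nhds |ip d (eV k)|) :=
        (((continuous_ip (eV k)).abs).tendsto d).comp hconv
      exact ge_of_tendsto' hcont (fun n => (huip (φ n)).le)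
    have hsq : ‖eV k‖ = 1 := heV1 k
    obtain ⟨hfar1, hfar2⟩ := hk d hILD
    rcases le_abs.mp hlimip with hpos | hneg
    · have hpos' : 1 - δ ^ 2 / 8 ≤ ip d (eV k) := hc ▸ hpos
      have h2 : ‖eV k - d‖ ^ 2 ≤ δ ^ 2 / 4 := by
        rw [norm_sub_sq', hsq, hd1, ip_comm]
        linarith
      nlinarith [norm_nonneg (eV k - d), hfar1, hδ0]
    · have hneg' : 1 - δ ^ 2 / 8 ≤ -ip d (eV k) := hc ▸ hneg
      have h2 : ‖eV k + d‖ ^ 2 ≤ δ ^ 2 / 4 := by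
        rw [norm_add_sq', hsq, hd1, ip_comm]
        linarith
      nlinarith [norm_nonneg (eV k + d), hfar2, hδ0]
  -- Step 5: countable decomposition and dimension bound
  set K : NNReal := Real.toNNReal ((Real.sqrt (1 - c ^ 2))⁻¹) with hK
  set piece : ℕ × ℕ × ℚ × ℚ → Set ℂ := fun w =>
    S ∩ {p | ∀ q ∈ S, q ≠ p → ‖q - p‖ < 1/((w.2.1:ℝ)+1) →
        |ip (q - p) (eV w.1)| ≤ c * ‖q - p‖} ∩
      Metric.ball (((w.2.2.1 : ℝ) : ℂ) + ((w.2.2.2 : ℝ) : ℂ) * I) (1/(2*((w.2.1:ℝ)+1)))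
    with hpiece
  have hcover : S ⊆ ⋃ w, piece w := by
    intro p hp
    obtain ⟨k, j, hkj⟩ := hcone p hp
    have hpos : (0:ℝ) < 1/(4*((j:ℝ)+1)) := by positivity
    obtain ⟨a, ha⟩ := exists_rat_near p.re hpos
    obtain ⟨b, hb⟩ := exists_rat_near p.im hpos
    refine Set.mem_iUnion.mpr ⟨(k, j, a, b), ⟨⟨hp, hkj⟩, ?_⟩⟩
    rw [Metric.mem_ball, Complex.dist_eq]
    have hre : (p - (((a : ℝ) : ℂ) + ((b : ℝ) : ℂ) * I)).re = p.re - (a:ℝ) := by simp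
    have him : (p - (((a : ℝ) : ℂ) + ((b : ℝ) : ℂ) * I)).im = p.im - (b:ℝ) := by simp
    calc ‖p - (((a : ℝ) : ℂ) + ((b : ℝ) : ℂ) * I)‖
        ≤ |(p - (((a : ℝ) : ℂ) + ((b : ℝ) : ℂ) * I)).re| +
          |(p - (((a : ℝ) : ℂ) + ((b : ℝ) : ℂ) * I)).im| := Complex.norm_le_abs_re_add_abs_im _
      _ < 1/(4*((j:ℝ)+1)) + 1/(4*((j:ℝ)+1)) := by rw [hre, him]; exact add_lt_add ha hb
      _ = 1/(2*((j:ℝ)+1)) := by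
            rw [← add_div, div_eq_div_iff (by positivity) (by positivity)]
            ring
  have hdim : ∀ w, dimH (piece w) ≤ 1 := by
    intro ⟨k, j, a, b⟩
    apply dimH_le_one (I * eV k) K
    intro p hp q hq
    rcases eq_or_ne q p with rfl | hne
    · simp [ip]
    obtain ⟨⟨hpS, hpcone⟩, hpball⟩ := hp
    obtain ⟨⟨hqS, -⟩, hqball⟩ := hq
    have hdist : ‖q - p‖ < 1/((j:ℝ)+1) := by
      rw [Metric.mem_ball] at hpball hqball
      rw [← dist_eq_norm]
      calc dist q p
          ≤ dist q (((a : ℝ) : ℂ) + ((b : ℝ) : ℂ) * I)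
            + dist (((a : ℝ) : ℂ) + ((b : ℝ) : ℂ) * I) p := dist_triangle _ _ _
      _ < 1/(2*((j:ℝ)+1)) + 1/(2*((j:ℝ)+1)) := by
          refine add_lt_add hqball ?_
          rw [dist_comm]
          exact hpball
      _ = 1/((j:ℝ)+1) := by
            rw [← add_div, div_eq_div_iff (by positivity) (by positivity)]
            ring
    have hip := hpcone q hqS hne hdist
    have hKeq : (K : ℝ) = (Real.sqrt (1 - c ^ 2))⁻¹ := by
      rw [hK, Real.coe_toNNReal]
      positivity
    rw [hKeq]
    exact pair_est (eV k) (q - p) (heV1 k) hc0 hc1 hip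
  have hle : dimH S ≤ 1 := by
    calc dimH S ≤ dimH (⋃ w, piece w) := dimH_mono hcover
    _ = ⨆ w, dimH (piece w) := dimH_iUnion _
    _ ≤ 1 := iSup_le hdim
  exact absurd hS (not_lt.mpr hle)
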